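/- arXiv:2106.01130 — 5 statements merged into one kernel-verified Lean document; each statement's English description precedes it below -/
import Mathlib

section
/- Fix real numbers t₀ < t, an integer m ≥ 0, and a continuous function g : [t₀, t] → ℝ. Define for s > 0 the quantity D_m(s) := (1/(2s)) ∫_{t₀}^t exp(−(t−t₁)/s) · exp(∫_{t₁}^t g(u) du) · (t−t₁)^m dt₁. Then lim_{s → 0⁺} D_m(s) = 1/2 if m = 0, and lim_{s → 0⁺} D_m(s) = 0 if m ≥ 1. -/
open Filter Topology MeasureTheory Set

/-- White-noise limit of the nonlinear Fokker–Planck coefficients `D_m` under OU noise: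
as the correlation time `s → 0⁺`, `D_m(s) → 1/2` for `m = 0` and `D_m(s) → 0` for `m ≥ 1`. -/
theorem stmt_2 (t₀ t : ℝ) (hlt : t₀ < t) (m : ℕ) (g : ℝ → ℝ)
    (hg : ContinuousOn g (Set.Icc t₀ t)) :
    Tendsto (fun s : ℝ => (1/(2*s)) * ∫ t₁ in t₀..t,
        Real.exp (-(t - t₁)/s) * Real.exp (∫ u in t₁..t, g u) * (t - t₁)^m)
      (𝓝[>] 0) (𝓝 (if m = 0 then (1/2 : ℝ) else 0)) := by
  set T : ℝ := t - t₀ with hTdef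
  have hT0 : 0 < T := sub_pos.mpr hlt
  set G : ℝ → ℝ := fun x => ∫ u in x..t, g u with hGdef
  have hgint : IntegrableOn g (Set.Icc t₀ t) := hg.integrableOn_Icc
  have hGcont : ContinuousOn G (Set.Icc t₀ t) := by
    have h := intervalIntegral.continuousOn_primitive_interval_left
      (f := g) (μ := volume) (a := t₀) (b := t)
      (by rwa [Set.uIcc_of_le hlt.le])
    rwa [Set.uIcc_of_le hlt.le] at h
  have hGt : G t = 0 := by simp [hGdef]
  -- bound on exp ∘ G over the compact interval
  obtain ⟨M, hM⟩ := isCompact_Icc.exists_bound_of_continuousOn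
    (Real.continuous_exp.comp_continuousOn hGcont)
  have hM0 : 0 ≤ M := le_trans (norm_nonneg _) (hM t₀ ⟨le_rfl, hlt.le⟩)
  -- the rescaled integral
  set I : ℝ → ℝ := fun s => ∫ v in (0:ℝ)..(T/s),
      Real.exp (-v) * Real.exp (G (t - s*v)) * v^m with hIdef
  -- Step A: algebraic identity for s > 0
  have key : ∀ s : ℝ, 0 < s →
      (1/(2*s)) * (∫ t₁ in t₀..t,
        Real.exp (-(t - t₁)/s) * Real.exp (∫ u in t₁..t, g u) * (t - t₁)^m)
      = s^m/2 * I s := by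
    intro s hs
    set f : ℝ → ℝ := fun r => Real.exp (-r/s) * Real.exp (G (t - r)) * r^m with hfdef
    have h1 : (∫ t₁ in t₀..t,
        Real.exp (-(t - t₁)/s) * Real.exp (∫ u in t₁..t, g u) * (t - t₁)^m)
        = ∫ r in (t - t)..(t - t₀), f r := by
      rw [← intervalIntegral.integral_comp_sub_left f t]
      refine intervalIntegral.integral_congr fun x _ => ?_
      simp [hfdef, hGdef, sub_sub_cancel]
    have h2 : (∫ v in (0:ℝ)..(T/s), f (s*v)) = s⁻¹ • ∫ r in (0:ℝ)..T, f r := by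
      have := intervalIntegral.integral_comp_mul_left f (a := 0) (b := T/s)
        (c := s) hs.ne'
      rwa [mul_zero, mul_div_cancel₀ _ hs.ne'] at this
    have h3 : (∫ v in (0:ℝ)..(T/s), f (s*v)) = s^m * I s := by
      simp only [hIdef, ← intervalIntegral.integral_const_mul]
      refine intervalIntegral.integral_congr fun v _ => ?_
      show Real.exp (-(s*v)/s) * Real.exp (G (t - s*v)) * (s*v)^m
          = s^m * (Real.exp (-v) * Real.exp (G (t - s*v)) * v^m)
      rw [neg_div, mul_div_cancel_left₀ _ hs.ne', mul_pow]
      ring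
    have hTt : t - t = 0 := sub_self t
    rw [h1, hTt, ← hTdef]
    have h4 : (∫ r in (0:ℝ)..T, f r) = s * (s^m * I s) := by
      rw [← h3, h2, smul_eq_mul]
      field_simp
    rw [h4]
    field_simp
  -- Step B: Tendsto I (𝓝[>] 0) (𝓝 m!)
  have hB : Tendsto I (𝓝[>] (0:ℝ)) (𝓝 (Nat.factorial m)) := by
    -- express I s as an integral of an indicator function
    have hIeq : ∀ s : ℝ, 0 < s → I s
        = ∫ v, ((Set.Ioc (0:ℝ) (T/s)).indicator
            fun v => Real.exp (-v) * Real.exp (G (t - s*v)) * v^m) v := by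
      intro s hs
      simp only [hIdef]
      rw [intervalIntegral.integral_of_le (by positivity : (0:ℝ) ≤ T/s),
        ← MeasureTheory.integral_indicator measurableSet_Ioc]
    have hgoal : (Nat.factorial m : ℝ)
        = ∫ v, ((Set.Ioi (0:ℝ)).indicator fun v => Real.exp (-v) * 1 * v^m) v := by
      rw [MeasureTheory.integral_indicator measurableSet_Ioi]
      have : (∫ v in Set.Ioi (0:ℝ), Real.exp (-v) * 1 * v^m)
          = ∫ v in Set.Ioi (0:ℝ), Real.exp (-v) * v ^ ((m:ℝ) + 1 - 1) := by
        refine setIntegral_congr_fun measurableSet_Ioi fun x hx => ?_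
        rw [add_sub_cancel_right, Real.rpow_natCast]
        ring
      rw [this, ← Real.Gamma_eq_integral (by positivity : (0:ℝ) < (m:ℝ) + 1)]
      exact_mod_cast (Real.Gamma_nat_eq_factorial m).symm
    rw [hgoal]
    refine Tendsto.congr'
      (Eventually.mono self_mem_nhdsWithin fun s hs => (hIeq s hs).symm) ?_
    refine tendsto_integral_filter_of_dominated_convergence
      ((Set.Ioi (0:ℝ)).indicator fun v => M * (Real.exp (-v) * v^m)) ?_ ?_ ?_ ?_
    · -- measurability
      refine Eventually.mono self_mem_nhdsWithin fun s (hs : (0:ℝ) < s) => ?_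
      refine (aestronglyMeasurable_indicator_iff measurableSet_Ioc).2 ?_
      refine ContinuousOn.aestronglyMeasurable ?_ measurableSet_Ioc
      have hmap : Set.MapsTo (fun v : ℝ => t - s*v) (Set.Ioc 0 (T/s)) (Set.Icc t₀ t) := by
        intro v hv
        have h1 : 0 < v := hv.1
        have h2 : s * v ≤ T := by
          rw [mul_comm]; exact (le_div_iff₀ hs).mp hv.2
        show t - s*v ∈ Set.Icc t₀ t
        have h2' : s * v ≤ t - t₀ := h2
        have h3 : 0 < s * v := mul_pos hs h1
        exact ⟨by linarith, by linarith⟩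
      have hGc : ContinuousOn (fun v : ℝ => Real.exp (G (t - s*v))) (Set.Ioc 0 (T/s)) :=
        Real.continuous_exp.comp_continuousOn
          (hGcont.comp ((continuous_const.sub (continuous_const.mul continuous_id)).continuousOn) hmap)
      exact ((Real.continuous_exp.comp continuous_neg).continuousOn.mul hGc).mul
        (continuous_pow m).continuousOn
    · -- bound
      refine Eventually.mono self_mem_nhdsWithin fun s (hs : (0:ℝ) < s) => ?_
      refine Eventually.of_forall fun v => ?_
      by_cases hv : v ∈ Set.Ioc (0:ℝ) (T/s)
      · rw [Set.indicator_of_mem hv, Set.indicator_of_mem (Set.Ioc_subset_Ioi_self hv)]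
        have hv0 : 0 < v := hv.1
        have hmem : t - s*v ∈ Set.Icc t₀ t := by
          have h2 : s * v ≤ T := by
            rw [mul_comm]; exact (le_div_iff₀ hs).mp hv.2
          have h2' : s * v ≤ t - t₀ := h2
          have h3 : 0 < s * v := mul_pos hs hv0
          exact ⟨by linarith, by linarith⟩
        have hEb : Real.exp (G (t - s*v)) ≤ M := by
          have := hM _ hmem
          rwa [Function.comp_apply, Real.norm_eq_abs, abs_of_pos (Real.exp_pos _)] at this
        rw [Real.norm_eq_abs, abs_of_nonneg (mul_nonneg (mul_nonneg (Real.exp_pos _).le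
          (Real.exp_pos _).le) (pow_nonneg hv0.le m))]
        have h1 : Real.exp (-v) * Real.exp (G (t - s*v)) * v^m
            ≤ Real.exp (-v) * M * v^m := by
          have hpq : 0 ≤ Real.exp (-v) := (Real.exp_pos _).le
          have hvm : (0:ℝ) ≤ v^m := by positivity
          nlinarith [mul_le_mul_of_nonneg_left hEb hpq]
        linarith [h1, le_of_eq (by ring : Real.exp (-v) * M * v^m = M * (Real.exp (-v) * v^m))]
      · rw [Set.indicator_of_notMem hv]
        simp only [norm_zero]
        by_cases hv' : v ∈ Set.Ioi (0:ℝ)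
        · rw [Set.indicator_of_mem hv']
          have hv0 : (0:ℝ) < v := hv'
          exact mul_nonneg hM0 (mul_nonneg (Real.exp_pos _).le (pow_nonneg hv0.le m))
        · rw [Set.indicator_of_notMem hv']
    · -- integrability of the bound
      rw [MeasureTheory.integrable_indicator_iff measurableSet_Ioi]
      have h := Real.GammaIntegral_convergent (s := (m:ℝ) + 1) (by positivity)
      rw [add_sub_cancel_right] at h
      have h' : IntegrableOn (fun v : ℝ => Real.exp (-v) * v^m) (Set.Ioi 0) := by
        refine h.congr_fun (fun x hx => ?_) measurableSet_Ioi
        simp only [Real.rpow_natCast]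
      exact h'.const_mul M
    · -- pointwise limit
      refine Eventually.of_forall fun v => ?_
      by_cases hv : 0 < v
      · have hev : ∀ᶠ s in 𝓝[>] (0:ℝ), s ∈ Set.Ioo 0 (T/v) :=
          Ioo_mem_nhdsGT_of_mem (show (0:ℝ) ∈ Set.Ico (0:ℝ) (T/v) from
            ⟨le_rfl, by positivity⟩)
        have heq : ∀ᶠ s in 𝓝[>] (0:ℝ),
            Real.exp (-v) * Real.exp (G (t - s*v)) * v^m
            = ((Set.Ioc (0:ℝ) (T/s)).indicator
                fun w => Real.exp (-w) * Real.exp (G (t - s*w)) * w^m) v := by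
          refine hev.mono fun s hs => ?_
          have hsv : v ≤ T/s := by
            rw [le_div_iff₀ (by exact hs.1 : (0:ℝ) < s)]
            have := (lt_div_iff₀ hv).mp hs.2
            nlinarith
          rw [Set.indicator_of_mem (show v ∈ Set.Ioc (0:ℝ) (T/s) from ⟨hv, hsv⟩)]
        rw [show ((Set.Ioi (0:ℝ)).indicator fun w => Real.exp (-w) * 1 * w^m) v
            = Real.exp (-v) * 1 * v^m from Set.indicator_of_mem hv _]
        refine Tendsto.congr' heq ?_
        have hmapt : Tendsto (fun s : ℝ => t - s*v) (𝓝[>] 0) (𝓝[Set.Icc t₀ t] t) := by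
          rw [tendsto_nhdsWithin_iff]
          constructor
          · have : Tendsto (fun s : ℝ => t - s*v) (𝓝 0) (𝓝 (t - 0*v)) :=
              (continuous_const.sub (continuous_id.mul continuous_const)).tendsto 0
            simpa using this.mono_left nhdsWithin_le_nhds
          · refine hev.mono fun s hs => ?_
            have h1 : 0 < s * v := mul_pos hs.1 hv
            have h2 : s * v < T := by
              have := (lt_div_iff₀ hv).mp hs.2
              nlinarith
            constructor
            · simp only [hTdef] at h2; linarith
            · linarith
        have hGlim : Tendsto (fun s : ℝ => Real.exp (G (t - s*v))) (𝓝[>] 0) (𝓝 1) := by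
          have : Tendsto (fun s : ℝ => G (t - s*v)) (𝓝[>] 0) (𝓝 (G t)) :=
            (hGcont t ⟨hlt.le, le_rfl⟩).tendsto.comp hmapt
          rw [hGt] at this
          simpa [Function.comp_def] using (Real.continuous_exp.tendsto 0).comp this
        simpa using (tendsto_const_nhds.mul hGlim).mul
          (tendsto_const_nhds : Tendsto (fun _ : ℝ => v^m) (𝓝[>] 0) _)
      · have hnot : ∀ s : ℝ, v ∉ Set.Ioc (0:ℝ) (T/s) := fun s hmem => hv hmem.1
        have : (fun s : ℝ => ((Set.Ioc (0:ℝ) (T/s)).indicator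
            fun w => Real.exp (-w) * Real.exp (G (t - s*w)) * w^m) v)
            = fun _ => (0:ℝ) := funext fun s => Set.indicator_of_notMem (hnot s) _
        rw [this, Set.indicator_of_notMem (by simpa using hv)]
        exact tendsto_const_nhds
  -- Step C: combine
  have hpow : Tendsto (fun s : ℝ => s^m/2) (𝓝[>] (0:ℝ)) (𝓝 ((0:ℝ)^m/2)) :=
    (((continuous_pow m).div_const 2).tendsto 0).mono_left nhdsWithin_le_nhds
  have hfinal : Tendsto (fun s : ℝ => s^m/2 * I s) (𝓝[>] (0:ℝ))
      (𝓝 ((0:ℝ)^m/2 * (Nat.factorial m))) := hpow.mul hB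
  have hval : (if m = 0 then (1/2 : ℝ) else 0) = (0:ℝ)^m/2 * (Nat.factorial m) := by
    cases m with
    | zero => norm_num
    | succ k => simp [zero_pow]
  rw [hval]
  exact Tendsto.congr'
    (Eventually.mono self_mem_nhdsWithin fun s hs => (key s hs).symm) hfinal
end

section
/- Let V : ℝ → ℝ be twice continuously differentiable and let σ, A : ℝ → ℝ be twice continuously differentiable with σ(x) > 0 and A(x) > 0 for all x. Fix x₀ ∈ ℝ and define p₀(x) := (1/(σ(x)A(x))) · exp(−∫_{x₀}^x V'(y)/(σ(y)²A(y)) dy). Then for every x ∈ ℝ, (V'(x) − σ'(x)σ(x)A(x)) · p₀(x) + (d/dx)[σ(x)²A(x)p₀(x)] = 0; in particular, p₀ satisfies the stationary equation (d/dx){[V'(x) − σ'(x)σ(x)A(x)]p₀(x)} + (d²/dx²)[σ(x)²A(x)p₀(x)] = 0. -/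
/-- Closed-form solution of the stationary nonlinear Fokker–Planck equation: for `V` twice
continuously differentiable and `σ, A` twice continuously differentiable and positive,
`p₀(x) = (1/(σ(x)A(x)))·exp(-∫_{x₀}^x V'(y)/(σ(y)²A(y)) dy)` has zero probability flux,
`(V'(x) - σ'(x)σ(x)A(x))p₀(x) + d/dx[σ(x)²A(x)p₀(x)] = 0`, and in particular satisfies the
stationary equation
`d/dx{[V'(x) - σ'(x)σ(x)A(x)]p₀(x)} + d²/dx²[σ(x)²A(x)p₀(x)] = 0`. -/
theorem stmt_7 (V σ A : ℝ → ℝ)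
    (hV : ContDiff ℝ 2 V) (hσ : ContDiff ℝ 2 σ) (hA : ContDiff ℝ 2 A)
    (hσpos : ∀ x, 0 < σ x) (hApos : ∀ x, 0 < A x) (x₀ : ℝ)
    (p₀ : ℝ → ℝ)
    (hp₀ : ∀ x, p₀ x
      = (1/(σ x * A x)) * Real.exp (-∫ y in x₀..x, deriv V y / ((σ y)^2 * A y))) :
    ∀ x : ℝ,
      ((deriv V x - deriv σ x * σ x * A x) * p₀ x
          + deriv (fun y => (σ y)^2 * A y * p₀ y) x = 0)
      ∧ (deriv (fun y => (deriv V y - deriv σ y * σ y * A y) * p₀ y) x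
          + deriv (deriv (fun y => (σ y)^2 * A y * p₀ y)) x = 0) := by
  set f : ℝ → ℝ := fun y => deriv V y / ((σ y)^2 * A y) with hf
  have hσne : ∀ x, σ x ≠ 0 := fun x => (hσpos x).ne'
  have hAne : ∀ x, A x ≠ 0 := fun x => (hApos x).ne'
  have hfc : Continuous f := by
    apply Continuous.div (hV.continuous_deriv one_le_two)
      (((hσ.continuous.pow 2).mul hA.continuous))
    intro x
    exact mul_ne_zero (pow_ne_zero 2 (hσne x)) (hAne x)
  set F : ℝ → ℝ := fun x => ∫ y in x₀..x, f y with hF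
  have hFd : ∀ x, HasDerivAt F (f x) x := fun x =>
    (hfc.integral_hasStrictDerivAt x₀ x).hasDerivAt
  -- σ²A p₀ = σ · exp(-F)
  have hkey : (fun y => (σ y)^2 * A y * p₀ y) = fun y => σ y * Real.exp (-F y) := by
    funext y
    rw [hp₀ y, show (∫ z in x₀..y, f z) = F y from rfl]
    generalize Real.exp (-F y) = e
    field_simp [hσne y, hAne y]
  have hσd : ∀ x, HasDerivAt σ (deriv σ x) x :=
    fun x => ((hσ.differentiable two_ne_zero).differentiableAt).hasDerivAt
  have hΦd : ∀ x, HasDerivAt (fun y => σ y * Real.exp (-F y))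
      (deriv σ x * Real.exp (-F x) + σ x * (Real.exp (-F x) * (-f x))) x := by
    intro x
    exact (hσd x).mul ((hFd x).fun_neg.exp)
  have hflux : ∀ x, deriv σ x * Real.exp (-F x) + σ x * (Real.exp (-F x) * (-f x))
      = -((deriv V x - deriv σ x * σ x * A x) * p₀ x) := by
    intro x
    rw [hp₀ x, show (∫ z in x₀..x, f z) = F x from rfl]
    generalize Real.exp (-F x) = e
    simp only [hf]
    field_simp [hσne x, hAne x]
    ring
  have hderiv : ∀ x, deriv (fun y => (σ y)^2 * A y * p₀ y) x
      = -((deriv V x - deriv σ x * σ x * A x) * p₀ x) := by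
    intro x
    rw [hkey, (hΦd x).deriv, hflux x]
  intro x
  refine ⟨by rw [hderiv x]; ring, ?_⟩
  have h2 : deriv (fun y => (σ y)^2 * A y * p₀ y)
      = fun x => -((deriv V x - deriv σ x * σ x * A x) * p₀ x) := funext hderiv
  rw [h2, deriv.fun_neg]
  ring
end

section
/- Let V : ℝ → ℝ be continuously differentiable and let σ, A : ℝ → ℝ be continuously differentiable with σ(x) > 0 and A(x) > 0 for all x. Fix x₀ ∈ ℝ and define p₀(x) := (1/(σ(x)A(x))) · exp(−∫_{x₀}^x V'(y)/(σ(y)²A(y)) dy). Then p₀ is differentiable, and for every x ∈ ℝ, p₀'(x) = 0 if and only if V'(x) + σ(x)·(d/dx)[σ(x)A(x)] = 0. -/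
/-- Critical points of the stationary PDF in the multiplicative-noise case: for `V` C¹ and
`σ, A` C¹ and positive, the density
`p₀(x) = (1/(σ(x)A(x)))·exp(-∫_{x₀}^x V'(y)/(σ(y)²A(y)) dy)` is differentiable, and
`p₀'(x) = 0` iff `V'(x) + σ(x)·d/dx[σ(x)A(x)] = 0`. -/
theorem stmt_8 (V σ A : ℝ → ℝ)
    (hV : ContDiff ℝ 1 V) (hσ : ContDiff ℝ 1 σ) (hA : ContDiff ℝ 1 A)
    (hσpos : ∀ x, 0 < σ x) (hApos : ∀ x, 0 < A x) (x₀ : ℝ)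
    (p₀ : ℝ → ℝ)
    (hp₀ : ∀ x, p₀ x
      = (1/(σ x * A x)) * Real.exp (-∫ y in x₀..x, deriv V y / ((σ y)^2 * A y))) :
    Differentiable ℝ p₀
    ∧ ∀ x : ℝ, (deriv p₀ x = 0
        ↔ deriv V x + σ x * deriv (fun y => σ y * A y) x = 0) := by
  set g : ℝ → ℝ := fun y => σ y * A y with hgdef
  set f : ℝ → ℝ := fun y => deriv V y / ((σ y)^2 * A y) with hfdef
  set F : ℝ → ℝ := fun x => ∫ y in x₀..x, f y with hFdef
  have hσd : Differentiable ℝ σ := hσ.differentiable one_ne_zero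
  have hAd : Differentiable ℝ A := hA.differentiable one_ne_zero
  have hgd : Differentiable ℝ g := hσd.mul hAd
  have hσne : ∀ x, σ x ≠ 0 := fun x => (hσpos x).ne'
  have hAne : ∀ x, A x ≠ 0 := fun x => (hApos x).ne'
  have hgpos : ∀ x, 0 < g x := fun x => mul_pos (hσpos x) (hApos x)
  have hgne : ∀ x, g x ≠ 0 := fun x => (hgpos x).ne'
  have hfc : Continuous f := by
    apply (hV.continuous_deriv le_rfl).div (((hσ.continuous.pow 2).mul hA.continuous))
    intro x
    exact mul_ne_zero (pow_ne_zero 2 (hσne x)) (hAne x)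
  have hF : ∀ x, HasDerivAt F (f x) x := by
    intro x
    exact intervalIntegral.integral_hasDerivAt_right (hfc.intervalIntegrable _ _)
      (hfc.stronglyMeasurableAtFilter _ _) hfc.continuousAt
  have hp : p₀ = fun x => (g x)⁻¹ * Real.exp (-F x) := by
    funext x
    rw [hp₀ x, one_div]
  have hP : ∀ x, HasDerivAt p₀
      (-(deriv g x) / g x ^ 2 * Real.exp (-F x)
        + (g x)⁻¹ * (Real.exp (-F x) * -f x)) x := by
    intro x
    rw [hp]
    exact (((hgd x).hasDerivAt).inv (hgne x)).mul ((hF x).neg.exp)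
  refine ⟨fun x => (hP x).differentiableAt, fun x => ?_⟩
  have hd : deriv p₀ x = -(Real.exp (-F x) / (σ x * g x ^ 2))
      * (deriv V x + σ x * deriv g x) := by
    rw [(hP x).deriv, hfdef]
    have h1 : σ x ≠ 0 := hσne x
    have h2 : A x ≠ 0 := hAne x
    have h3 : g x = σ x * A x := rfl
    field_simp [h3]
    ring
  rw [hd]
  constructor
  · intro h
    rcases mul_eq_zero.mp h with h' | h'
    · exfalso
      have : Real.exp (-F x) / (σ x * g x ^ 2) > 0 :=
        div_pos (Real.exp_pos _) (mul_pos (hσpos x) (pow_pos (hgpos x) 2))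
      simp only [neg_eq_zero] at h'
      exact this.ne' h'
    · exact h'
  · intro h
    rw [h, mul_zero]
end

section
/- Let V : ℝ → ℝ be continuously differentiable, let σ > 0 be a constant, and let A : ℝ → ℝ be continuously differentiable with A(x) > 0 for all x. Fix x₀ ∈ ℝ and define p₀(x) := (1/(σA(x))) · exp(−∫_{x₀}^x V'(y)/(σ²A(y)) dy). Then p₀ is differentiable, and for every x ∈ ℝ, p₀'(x) = 0 if and only if V'(x) + σ²A'(x) = 0. -/
/-- Peak drift for additive colored noise: for `V` C¹, constant `σ > 0`, and `A` C¹ positive,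
the density `p₀(x) = (1/(σA(x)))·exp(-∫_{x₀}^x V'(y)/(σ²A(y)) dy)` is differentiable and
`p₀'(x) = 0` iff `V'(x) + σ²A'(x) = 0`. -/
theorem stmt_9 (V A : ℝ → ℝ) (σ : ℝ) (hσ : 0 < σ)
    (hV : ContDiff ℝ 1 V) (hA : ContDiff ℝ 1 A) (hApos : ∀ x, 0 < A x) (x₀ : ℝ)
    (p₀ : ℝ → ℝ)
    (hp₀ : ∀ x, p₀ x
      = (1/(σ * A x)) * Real.exp (-∫ y in x₀..x, deriv V y / (σ^2 * A y))) :
    Differentiable ℝ p₀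
    ∧ ∀ x : ℝ, (deriv p₀ x = 0 ↔ deriv V x + σ^2 * deriv A x = 0) := by
  have hpe : p₀ = fun x =>
      (1/(σ * A x)) * Real.exp (-∫ y in x₀..x, deriv V y / (σ^2 * A y)) := funext hp₀
  subst hpe
  set g : ℝ → ℝ := fun y => deriv V y / (σ^2 * A y) with hg_def
  have hVc : Continuous (deriv V) := hV.continuous_deriv le_rfl
  have hAc : Continuous A := hA.continuous
  have hden : ∀ x, σ^2 * A x ≠ 0 := fun x =>
    ne_of_gt (mul_pos (by positivity) (hApos x))
  have hgc : Continuous g := hVc.div (continuous_const.mul hAc) hden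
  set F : ℝ → ℝ := fun x => ∫ y in x₀..x, g y with hF_def
  have hF : ∀ x, HasDerivAt F (g x) x := by
    intro x
    exact intervalIntegral.integral_hasDerivAt_right
      (hgc.intervalIntegrable _ _)
      (hgc.stronglyMeasurableAtFilter _ _)
      hgc.continuousAt
  have hAd : ∀ x, HasDerivAt A (deriv A x) x := fun x =>
    ((hA.differentiable one_ne_zero) x).hasDerivAt
  have key : ∀ x, HasDerivAt (fun x => (1/(σ * A x)) * Real.exp (-F x))
      ((- Real.exp (-F x) / (σ^3 * (A x)^2)) * (deriv V x + σ^2 * deriv A x)) x := by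
    intro x
    have hσA : σ * A x ≠ 0 := ne_of_gt (mul_pos hσ (hApos x))
    have h1 : HasDerivAt (fun x => σ * A x) (σ * deriv A x) x :=
      (hAd x).const_mul σ
    have h2 : HasDerivAt (fun x => (σ * A x)⁻¹)
        (-(σ * deriv A x) / (σ * A x)^2) x := h1.inv hσA
    have h3 : HasDerivAt (fun x => Real.exp (-F x))
        (Real.exp (-F x) * (-(g x))) x := ((hF x).neg).exp
    have h4 : HasDerivAt (fun x => (σ * A x)⁻¹ * Real.exp (-F x)) _ x := h2.mul h3
    have hrw : (fun x => (σ * A x)⁻¹ * Real.exp (-F x))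
        = fun x => (1/(σ * A x)) * Real.exp (-F x) := by
      funext x; rw [one_div]
    rw [hrw] at h4
    convert h4 using 1
    have hAx := (hApos x).ne'
    have hσ' := hσ.ne'
    simp only [hg_def]
    field_simp [hg_def]
    ring
  constructor
  · intro x
    exact (key x).differentiableAt
  · intro x
    rw [(key x).deriv]
    have hc : - Real.exp (-F x) / (σ^3 * (A x)^2) ≠ 0 := by
      apply div_ne_zero
      · simp [(Real.exp_pos (-F x)).ne']
      · have := hApos x; positivity
    constructor
    · intro h
      rcases mul_eq_zero.mp h with h | h
      · exact absurd h hc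
      · exact h
    · intro h
      rw [h, mul_zero]
end

section
/- Let a, x̂, σ ∈ ℝ, s > 0, and R < 1/s. Define Ṽ'(x) := x³ − (1−a)x − a x̂, ζ(x) := (1−a) − 3x², and A₂(x) := (1/2) Σ_{m=0}^{2} [s(ζ(x) − R)]^m/(1 − sR)^{m+1}. Then for every x ∈ ℝ, Ṽ'(x) + σ²·A₂'(x) = c₃(R)·x³ − c₁(R)·x − a x̂, where c₁(R) = (1−a) + (3σ²s/(1 − sR)²)·[1 + 2s(1 − a − R)/(1 − sR)] and c₃(R) = 1 + 18σ²s²/(1 − sR)³. -/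
set_option maxHeartbeats 1000000


/-- Critical-point equation of the controlled bistable system reduces to a depressed cubic:
with `Ṽ'(x) = x³ - (1-a)x - a·x̂`, `ζ(x) = (1-a) - 3x²`, and
`A₂(x) = (1/2)·Σ_{m=0}^{2} [s(ζ(x)-R)]^m/(1-sR)^{m+1}`, one has
`Ṽ'(x) + σ²A₂'(x) = c₃(R)x³ - c₁(R)x - a·x̂` with the explicit coefficients below. -/
theorem stmt_11 (a xhat σ s R : ℝ) (hs : 0 < s) (hR : R < 1/s) :
    ∀ x : ℝ,
      (x^3 - (1 - a)*x - a*xhat)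
        + σ^2 * deriv (fun y : ℝ => (1/2) * ∑ m ∈ Finset.range 3,
            (s*(((1 - a) - 3*y^2) - R))^m / (1 - s*R)^(m+1)) x
      = (1 + 18*σ^2*s^2/(1 - s*R)^3) * x^3
        - ((1 - a) + (3*σ^2*s/(1 - s*R)^2) * (1 + 2*s*(1 - a - R)/(1 - s*R))) * x
        - a*xhat := by
  intro x
  have h1 : s * R < 1 := by
    have := (lt_div_iff₀ hs).mp hR
    linarith [this, mul_comm R s]
  have hD : (1 - s*R) ≠ 0 := by linarith
  set C0 : ℝ := (1/2)*(1/(1-s*R)) + s*(1-a-R)/(2*(1-s*R)^2) + s^2*(1-a-R)^2/(2*(1-s*R)^3) with hC0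
  set C2 : ℝ := (-(3*s)/(2*(1-s*R)^2) - 3*s^2*(1-a-R)/(1-s*R)^3) with hC2
  set C4 : ℝ := 9*s^2/(2*(1-s*R)^3) with hC4
  have hfun : (fun y : ℝ => (1/2) * ∑ m ∈ Finset.range 3,
      (s*(((1 - a) - 3*y^2) - R))^m / (1 - s*R)^(m+1))
      = fun y : ℝ => C0 + C2*y^2 + C4*y^4 := by
    funext y
    simp only [Finset.sum_range_succ, Finset.sum_range_zero, hC0, hC2, hC4]
    field_simp
    ring
  rw [hfun]
  have H : HasDerivAt (fun y : ℝ => C0 + C2*y^2 + C4*y^4)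
      (C2*(2*x^1) + C4*(4*x^3)) x := by
    have h2 : HasDerivAt (fun y : ℝ => y^2) (2*x^1) x := by
      simpa using hasDerivAt_pow 2 x
    have h4 : HasDerivAt (fun y : ℝ => y^4) (4*x^3) x := by
      simpa using hasDerivAt_pow 4 x
    have := ((h2.const_mul C2).add (h4.const_mul C4)).const_add C0
    exact this.congr_of_eventuallyEq (Filter.Eventually.of_forall fun y => by simp only [Pi.add_apply]; ring)
  rw [H.deriv, hC2, hC4]
  field_simp
  ring
end
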